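/- Let K be a field of characteristic 2 and let 𝔤 = K × 𝔞 × K carry the double-extension bracket ⁅(u,a,v),(u',a',v')⁆_𝔤 := (B (D a) a', ⁅a,a'⁆ + v • D a' + v' • D a, 0), where additionally B a (D a) = 0 for all a ∈ 𝔞. Assume: (a) sq : 𝔞 → 𝔞 is a 2-structure on 𝔞, i.e. ⁅sq a, b⁆ = ⁅a,⁅a,b⁆⁆, sq (λ • a) = λ² • sq a, and sq (a+b) = sq a + sq b + ⁅a,b⁆ for all a,b ∈ 𝔞, λ ∈ K; (b) D is restricted: D (sq a) = ⁅a, D a⁆ for all a; (c) D has the 2-property: D² = γ • D + ad a₀ with D a₀ = 0, for some γ ∈ K and a₀ ∈ 𝔞; (d) b₀ ∈ 𝔞 satisfies ⁅b₀, a⁆ = 0 for all a ∈ 𝔞 and D b₀ = 0; (e) 𝒫 : 𝔞 → K satisfies 𝒫 (λ • a) = λ² • 𝒫 a and 𝒫 (a+b) = 𝒫 a + 𝒫 b + B (D b) a for all a,b ∈ 𝔞, λ ∈ K. Then for all m, l ∈ K there exists a map sq_𝔤 : 𝔤 → 𝔤 which is a 2-structure on 𝔤, i.e. ⁅sq_𝔤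 f, g⁆_𝔤 = ⁅f,⁅f,g⁆_𝔤⁆_𝔤, sq_𝔤 (λ • f) = λ² • sq_𝔤 f, and sq_𝔤 (f+g) = sq_𝔤 f + sq_𝔤 g + ⁅f,g⁆_𝔤 for all f,g ∈ 𝔤, λ ∈ K, and which satisfies sq_𝔤 (0,a,0) = (𝒫 a, sq a, 0) for all a ∈ 𝔞, sq_𝔤 (0,0,1) = (l, a₀, γ), and sq_𝔤 (1,0,0) = (m, b₀, 0). -/
import Mathlib

/-- The bracket of the double extension of `(𝔞, B)` by the derivation `D`
on the space `K × 𝔞 × K`, in characteristic 2. -/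
def doubleExtBracket2 {K : Type*} [Field K] {L : Type*} [LieRing L] [LieAlgebra K L]
    (B : L →ₗ[K] L →ₗ[K] K) (D : L →ₗ[K] L) (f g : K × L × K) : K × L × K :=
  (B (D f.2.1) g.2.1, ⁅f.2.1, g.2.1⁆ + f.2.2 • D g.2.1 + g.2.2 • D f.2.1, (0 : K))

theorem two_structure_on_double_extension
    {K : Type*} [Field K] [CharP K 2]
    {L : Type*} [LieRing L] [LieAlgebra K L]
    (B : L →ₗ[K] L →ₗ[K] K)
    (hsym : ∀ a b : L, B a b = B b a)
    (hinv : ∀ a b c : L, B ⁅a, b⁆ c = B a ⁅b, c⁆)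
    (D : L →ₗ[K] L)
    (hder : ∀ a b : L, D ⁅a, b⁆ = ⁅D a, b⁆ + ⁅a, D b⁆)
    (hDinv : ∀ a b : L, B (D a) b + B a (D b) = 0)
    (hDinv2 : ∀ a : L, B a (D a) = 0)
    -- (a) a 2-structure on 𝔞
    (sq : L → L)
    (hsq_ad : ∀ a b : L, ⁅sq a, b⁆ = ⁅a, ⁅a, b⁆⁆)
    (hsq_smul : ∀ (l : K) (a : L), sq (l • a) = l ^ 2 • sq a)
    (hsq_add : ∀ a b : L, sq (a + b) = sq a + sq b + ⁅a, b⁆)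
    -- (b) D is restricted
    (hres : ∀ a : L, D (sq a) = ⁅a, D a⁆)
    -- (c) the 2-property
    (γ : K) (a₀ : L)
    (hpprop : ∀ b : L, D (D b) = γ • D b + ⁅a₀, b⁆)
    (ha₀ : D a₀ = 0)
    -- (d) a central element killed by D
    (b₀ : L) (hb₀c : ∀ a : L, ⁅b₀, a⁆ = 0) (hb₀ : D b₀ = 0)
    -- (e) the map 𝒫
    (P : L → K)
    (hP_smul : ∀ (l : K) (a : L), P (l • a) = l ^ 2 * P a)
    (hP_add : ∀ a b : L, P (a + b) = P a + P b + B (D b) a) :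
    ∀ m l : K, ∃ sqg : K × L × K → K × L × K,
      (∀ f g : K × L × K,
        doubleExtBracket2 B D (sqg f) g =
          doubleExtBracket2 B D f (doubleExtBracket2 B D f g)) ∧
      (∀ (lam : K) (f : K × L × K), sqg (lam • f) = lam ^ 2 • sqg f) ∧
      (∀ f g : K × L × K, sqg (f + g) = sqg f + sqg g + doubleExtBracket2 B D f g) ∧
      (∀ a : L, sqg ((0 : K), a, (0 : K)) = (P a, sq a, (0 : K))) ∧
      sqg ((0 : K), (0 : L), (1 : K)) = (l, a₀, γ) ∧
      sqg ((1 : K), (0 : L), (0 : K)) = (m, b₀, (0 : K)) := by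
  intro m l
  -- characteristic-two helpers
  have hkk : ∀ x : K, x + x = 0 := CharTwo.add_self_eq_zero
  have h2 : (2 : K) = 0 := CharTwo.two_eq_zero
  have haa : ∀ x : L, x + x = 0 := by
    intro x
    have : (2 : K) • x = 0 := by rw [h2, zero_smul]
    simpa [two_smul] using this
  have hneg : ∀ x : L, -x = x := by
    intro x; rw [neg_eq_iff_add_eq_zero, haa]
  -- basic consequences
  have hsq0 : sq 0 = 0 := by
    have := hsq_smul 0 0; simpa using this
  have hP0 : P 0 = 0 := by
    have := hP_smul 0 0; simpa using this
  have hBDsym : ∀ a b : L, B (D a) b = B a (D b) := by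
    intro a b
    linear_combination hDinv a b - hkk (B a (D b))
  have hBDflip : ∀ a b : L, B (D a) b = B (D b) a := by
    intro a b; rw [hBDsym, hsym]
  have hBa₀ : ∀ a : L, B ⁅a₀, a⁆ a = 0 := by
    intro a; rw [hinv]; simp
  have hBDDd : ∀ a b : L, B (D a) (D b) = γ * B (D a) b + B ⁅a₀, a⁆ b := by
    intro a b
    rw [← hBDsym (D a) b]
    have := hpprop a
    rw [this]
    simp [smul_eq_mul]
  have hBDa : ∀ a : L, B (D a) a = 0 := by
    intro a; rw [hsym]; exact hDinv2 a
  have hBDD : ∀ a : L, B (D a) (D a) = 0 := by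
    intro a; rw [hBDDd, hBDa, hBa₀]; ring
  refine ⟨fun f => (m * f.1 ^ 2 + P f.2.1 + l * f.2.2 ^ 2,
      f.1 ^ 2 • b₀ + sq f.2.1 + f.2.2 ^ 2 • a₀ + f.2.2 • D f.2.1,
      γ * f.2.2 ^ 2), ?_, ?_, ?_, ?_, ?_, ?_⟩
  · rintro ⟨u, a, v⟩ ⟨u', a', v'⟩
    simp only [doubleExtBracket2]
    refine Prod.ext ?_ (Prod.ext ?_ rfl)
    · -- K component
      simp only [map_add, map_smul, hb₀, hres, ha₀, hpprop, smul_zero, add_zero,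
        zero_add, smul_eq_mul, LinearMap.add_apply, LinearMap.smul_apply,
        map_zero]
      have e0 : ⁅a, D a⁆ = ⁅D a, a⁆ := by rw [← lie_skew, hneg]
      have e1 : B ⁅a, D a⁆ a' = B (D a) ⁅a, a'⁆ := by rw [e0, hinv]
      have e2 : B (D a) (D a') = γ * B (D a) a' + B ⁅a₀, a⁆ a' := hBDDd a a'
      have e3 : B (D a) (D a) = 0 := hBDD a
      linear_combination e1 - v * e2 - v' * e3
    · -- L component
      simp only [map_add, map_smul, hb₀, hres, ha₀, hpprop, hder, hsq_ad,
        hb₀c, smul_zero, add_zero, zero_add, zero_smul,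
        add_lie, lie_add, smul_lie, lie_smul, smul_add, smul_smul]
      match_scalars <;> first
        | ring1
        | (ring_nf; simp only [h2]; ring1)
  · rintro lam ⟨u, a, v⟩
    simp only [Prod.smul_def, smul_eq_mul, map_smul, hsq_smul, hP_smul,
      mul_pow, smul_smul, smul_add, Prod.mk.injEq]
    refine ⟨by ring, by module, by ring⟩
  · rintro ⟨u, a, v⟩ ⟨u', a', v'⟩
    simp only [doubleExtBracket2, Prod.mk_add_mk, Prod.mk.injEq]
    refine ⟨?_, ?_, by rw [CharTwo.add_sq]; ring⟩
    · rw [hP_add, CharTwo.add_sq, CharTwo.add_sq, hBDflip a' a]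
      ring
    · rw [hsq_add, CharTwo.add_sq, CharTwo.add_sq, map_add]
      simp only [add_smul, smul_add]
      abel
  · intro a
    simp [hsq0, hP0]
  · simp [hsq0, hP0]
  · simp [hsq0, hP0]
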